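/- Let G be a digraph on n vertices with Laplacian matrix L(G) over ℤ whose cokernel torsion (critical group) is K(G) ≅ ⊕_{i=1}^{n-1} ℤ_{f_i} with f_1 | f_2 | ⋯ | f_{n-1}. Then for all 1 ≤ i ≤ n-1, the evaluation of the i-th critical ideal at the out-degree vector d_G equals the principal ideal of ℤ generated by f_1·f_2⋯f_i. -/

import Mathlib

open Matrix Finset
set_option linter.unusedSectionVars false

variable {R : Type} [CommRing R] {α β γ : Type} [Fintype α] [Fintype β] [Fintype γ]
  [DecidableEq α] [DecidableEq β] [DecidableEq γ]

/-- ideal generated by all k×k minors -/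
def mI (M : Matrix α β R) (k : ℕ) : Ideal R :=
  Ideal.span {x | ∃ (r : Fin k → α) (s : Fin k → β), x = (M.submatrix r s).det}

lemma det_mem_mI (M : Matrix α β R) {k : ℕ} (r : Fin k → α) (s : Fin k → β) :
    (M.submatrix r s).det ∈ mI M k :=
  Ideal.subset_span ⟨r, s, rfl⟩

lemma det_mem_mI' (M : Matrix α β R) {k : ℕ} (e : γ ≃ Fin k) (r : γ → α) (s : γ → β) :
    (M.submatrix r s).det ∈ mI M k := by
  have h : M.submatrix r s = (M.submatrix (r ∘ e.symm) (s ∘ e.symm)).submatrix e e := by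
    ext i j; simp
  rw [h, det_submatrix_equiv_self]
  exact det_mem_mI M _ _

/-- Cauchy–Binet style expansion. -/
lemma det_mul_expansion {k : ℕ} (A : Matrix (Fin k) β R) (B : Matrix β (Fin k) R) :
    (A * B).det = ∑ p : Fin k → β, (∏ i, B (p i) i) * (A.submatrix id p).det := by
  calc (A * B).det
      = ∑ p : Fin k → β, ∑ σ : Equiv.Perm (Fin k),
          Equiv.Perm.sign σ • ∏ i, A (σ i) (p i) * B (p i) i := by
        simp only [det_apply, mul_apply, prod_univ_sum, smul_sum, Fintype.piFinset_univ]
        rw [Finset.sum_comm]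
    _ = _ := by
        refine Finset.sum_congr rfl fun p _ => ?_
        rw [mul_comm (∏ i, B (p i) i), det_apply, Finset.sum_mul]
        refine Finset.sum_congr rfl fun σ _ => ?_
        rw [smul_mul_assoc]
        congr 1
        rw [← prod_mul_distrib]
        exact Finset.prod_congr rfl fun i _ => by simp

lemma mI_mul_le_left {k : ℕ} (M : Matrix α β R) (N : Matrix β γ R) :
    mI (M * N) k ≤ mI M k := by
  rw [mI, Ideal.span_le]
  rintro x ⟨r, s, rfl⟩
  have h : (M * N).submatrix r s = (M.submatrix r id) * (N.submatrix id s) :=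
    submatrix_mul M N r id s Function.bijective_id
  rw [h, det_mul_expansion]
  exact Ideal.sum_mem _ fun p _ =>
    Ideal.mul_mem_left _ _ (by simpa using det_mem_mI M r p)

lemma mI_transpose (M : Matrix α β R) (k : ℕ) : mI Mᵀ k = mI M k := by
  have h : ∀ {α β : Type} [Fintype α] [Fintype β] [DecidableEq α] [DecidableEq β]
      (M : Matrix α β R), mI Mᵀ k ≤ mI M k := by
    intro α β _ _ _ _ M
    rw [mI, Ideal.span_le]
    rintro x ⟨r, s, rfl⟩
    rw [show (Mᵀ.submatrix r s) = (M.submatrix s r)ᵀ from rfl, det_transpose]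
    exact det_mem_mI M s r
  exact le_antisymm (h M) (by simpa using h Mᵀ)

lemma mI_mul_le_right {k : ℕ} (M : Matrix α β R) (N : Matrix β γ R) :
    mI (M * N) k ≤ mI N k := by
  rw [← mI_transpose (M * N), transpose_mul, ← mI_transpose N]
  exact mI_mul_le_left Nᵀ Mᵀ

lemma mI_unit_mul {k : ℕ} (U : Matrix α α R) (U' : Matrix α α R) (h1 : U * U' = 1)
    (h2 : U' * U = 1) (M : Matrix α β R) : mI (U * M) k = mI M k := by
  refine le_antisymm (mI_mul_le_right U M) ?_
  have : M = U' * (U * M) := by rw [← Matrix.mul_assoc, h2, Matrix.one_mul]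
  conv_lhs => rw [this]
  exact mI_mul_le_right U' (U * M)

lemma mI_mul_unit {k : ℕ} (V : Matrix β β R) (V' : Matrix β β R) (h1 : V * V' = 1)
    (h2 : V' * V = 1) (M : Matrix α β R) : mI (M * V) k = mI M k := by
  refine le_antisymm (mI_mul_le_left M V) ?_
  have : M = (M * V) * V' := by rw [Matrix.mul_assoc, h1, Matrix.mul_one]
  conv_lhs => rw [this]
  exact mI_mul_le_left (M * V) V'

lemma mI_reindex (e₁ : γ ≃ α) (e₂ : γ ≃ β) (M : Matrix α β R) (k : ℕ) :
    mI (M.submatrix e₁ e₂) k = mI M k := by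
  refine le_antisymm ?_ ?_ <;> rw [mI, Ideal.span_le] <;> rintro x ⟨r, s, rfl⟩
  · rw [submatrix_submatrix]; exact det_mem_mI M _ _
  · have : M.submatrix r s = (M.submatrix e₁ e₂).submatrix (e₁.symm ∘ r) (e₂.symm ∘ s) := by
      ext i j; simp
    rw [this]; exact det_mem_mI _ _ _

lemma mI_succ_le {k : ℕ} (M : Matrix α β R) : mI M (k + 1) ≤ mI M k := by
  rw [mI, Ideal.span_le]
  rintro x ⟨r, s, rfl⟩
  rw [det_succ_row_zero]
  refine Ideal.sum_mem _ fun j _ => Ideal.mul_mem_left _ _ ?_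
  rw [submatrix_submatrix]
  exact det_mem_mI M _ _

lemma mI_le_of_le {k k' : ℕ} (h : k ≤ k') (M : Matrix α β R) : mI M k' ≤ mI M k := by
  induction k' with
  | zero => simpa [Nat.le_zero.mp h] using le_rfl
  | succ k'' ih =>
      rcases Nat.lt_or_ge k (k'' + 1) with h' | h'
      · exact le_trans (mI_succ_le M) (ih (Nat.lt_succ_iff.mp h'))
      · have : k = k'' + 1 := le_antisymm h h'
        subst this; exact le_rfl

lemma det_submatrix_eq_zero_of_not_inj_left {k : ℕ} (M : Matrix α β R)
    {r : Fin k → α} (s : Fin k → β) (h : ¬ Function.Injective r) :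
    (M.submatrix r s).det = 0 := by
  rw [Function.not_injective_iff] at h
  obtain ⟨i, j, hij, hne⟩ := h
  exact det_zero_of_row_eq hne (by ext t; simp [hij])

lemma det_submatrix_eq_zero_of_not_inj_right {k : ℕ} (M : Matrix α β R)
    (r : Fin k → α) {s : Fin k → β} (h : ¬ Function.Injective s) :
    (M.submatrix r s).det = 0 := by
  rw [Function.not_injective_iff] at h
  obtain ⟨i, j, hij, hne⟩ := h
  exact det_zero_of_column_eq hne (fun t => by simp [hij])

lemma neg_one_unit_apply : (-1 : Matrix Unit Unit R) () () = -1 := by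
  simp [Matrix.one_apply]

/-- one-step block lemma -/
lemma mI_fromBlocks_one (B : Matrix α α R) (k : ℕ) :
    mI (fromBlocks B 0 0 (-1 : Matrix Unit Unit R)) (k + 1) = mI B k := by
  set C := fromBlocks B 0 0 (-1 : Matrix Unit Unit R) with hC
  have e : (Fin k ⊕ Unit) ≃ Fin (k + 1) :=
    (Equiv.sumCongr (Equiv.refl (Fin k)) (Equiv.ofUnique Unit (Fin 1))).trans finSumFinEquiv
  apply le_antisymm
  · -- mI C (k+1) ≤ mI B k
    rw [mI, Ideal.span_le]
    rintro x ⟨r, s, rfl⟩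
    by_cases hr : Function.Injective r
    swap
    · rw [det_submatrix_eq_zero_of_not_inj_left C s hr]; exact Ideal.zero_mem _
    by_cases hs : Function.Injective s
    swap
    · rw [det_submatrix_eq_zero_of_not_inj_right C r hs]; exact Ideal.zero_mem _
    by_cases hir : ∃ i, r i = Sum.inr ()
    · obtain ⟨i0, hi0⟩ := hir
      by_cases his : ∃ j, s j = Sum.inr ()
      · obtain ⟨j0, hj0⟩ := his
        rw [det_succ_row _ i0]
        refine Ideal.sum_mem _ fun j _ => ?_
        by_cases hj : j = j0
        · subst hj
          have hr' : ∀ t : Fin k, ∃ a, r (i0.succAbove t) = Sum.inl a := by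
            intro t
            cases h : r (i0.succAbove t) with
            | inl a => exact ⟨a, rfl⟩
            | inr u =>
                exfalso
                exact Fin.succAbove_ne i0 t (hr (h.trans (by cases u; exact hi0.symm)))
          have hs' : ∀ t : Fin k, ∃ a, s (j.succAbove t) = Sum.inl a := by
            intro t
            cases h : s (j.succAbove t) with
            | inl a => exact ⟨a, rfl⟩
            | inr u =>
                exfalso
                exact Fin.succAbove_ne j t (hs (h.trans (by cases u; exact hj0.symm)))
          choose r' hr' using hr'
          choose s' hs' using hs'
          have hsub : (C.submatrix r s).submatrix i0.succAbove j.succAbove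
              = B.submatrix r' s' := by
            ext t u
            simp only [submatrix_apply, Function.comp_apply, hr' t, hs' u, hC,
              fromBlocks_apply₁₁]
          rw [hsub]
          exact Ideal.mul_mem_left _ _ (det_mem_mI B r' s')
        · have : (C.submatrix r s) i0 j = 0 := by
            have : ∃ a, s j = Sum.inl a := by
              cases h : s j with
              | inl a => exact ⟨a, rfl⟩
              | inr u => exact absurd (hs (h.trans (by cases u; exact hj0.symm))) hj
            obtain ⟨a, ha⟩ := this
            simp [ha, hi0, hC]
          rw [this]
          simp
      · push_neg at his
        have : (C.submatrix r s).det = 0 := by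
          apply det_eq_zero_of_row_eq_zero i0
          intro j
          have : ∃ a, s j = Sum.inl a := by
            cases h : s j with
            | inl a => exact ⟨a, rfl⟩
            | inr u => exact absurd (by cases u; exact h) (his j)
          obtain ⟨a, ha⟩ := this
          simp [ha, hi0, hC]
        rw [this]; exact Ideal.zero_mem _
    · push_neg at hir
      have hr' : ∀ t, ∃ a, r t = Sum.inl a := by
        intro t
        cases h : r t with
        | inl a => exact ⟨a, rfl⟩
        | inr u => exact absurd (by cases u; exact h) (hir t)
      choose r' hr' using hr'
      by_cases his : ∃ j, s j = Sum.inr ()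
      · obtain ⟨j0, hj0⟩ := his
        have : (C.submatrix r s).det = 0 := by
          apply det_eq_zero_of_column_eq_zero j0
          intro i
          simp [hr' i, hj0, hC]
        rw [this]; exact Ideal.zero_mem _
      · push_neg at his
        have hs' : ∀ t, ∃ a, s t = Sum.inl a := by
          intro t
          cases h : s t with
          | inl a => exact ⟨a, rfl⟩
          | inr u => exact absurd (by cases u; exact h) (his t)
        choose s' hs' using hs'
        have hsub : C.submatrix r s = B.submatrix r' s' := by
          ext t u
          simp only [submatrix_apply, hr' t, hs' u, hC, fromBlocks_apply₁₁]
        rw [hsub]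
        exact mI_le_of_le (Nat.le_succ k) B (det_mem_mI B r' s')
  · -- mI B k ≤ mI C (k+1)
    rw [mI, Ideal.span_le]
    rintro x ⟨r, s, rfl⟩
    have hsub : C.submatrix (Sum.map r id) (Sum.map s id)
        = fromBlocks (B.submatrix r s) 0 0 (-1 : Matrix Unit Unit R) := by
      ext i j
      rcases i with i | i <;> rcases j with j | j <;> simp [hC]
    have hmem := det_mem_mI' C e (Sum.map r id) (Sum.map s id)
    have hdet : (-1 : Matrix Unit Unit R).det = -1 := by
      simp [Matrix.det_neg]
    rw [hsub, det_fromBlocks_zero₂₁, hdet] at hmem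
    have : (B.submatrix r s).det = -((B.submatrix r s).det * -1) := by ring
    rw [this]
    exact neg_mem hmem

/-- iterated block lemma -/
lemma mI_fromBlocks (B : Matrix α α R) (k : ℕ) : ∀ m : ℕ,
    mI (fromBlocks B 0 0 (-1 : Matrix (Fin m) (Fin m) R)) (k + m) = mI B k := by
  intro m
  induction m with
  | zero =>
      let e : α ≃ α ⊕ Fin 0 := (Equiv.sumEmpty α (Fin 0)).symm
      have hsub : (fromBlocks B 0 0 (-1 : Matrix (Fin 0) (Fin 0) R)).submatrix e e = B := by
        ext i j; rfl
      have := mI_reindex e e (fromBlocks B 0 0 (-1 : Matrix (Fin 0) (Fin 0) R)) (k + 0)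
      rw [hsub] at this
      exact this.symm
  | succ m ih =>
      set Cm := fromBlocks B 0 0 (-1 : Matrix (Fin m) (Fin m) R) with hCm
      let e : ((α ⊕ Fin m) ⊕ Unit) ≃ α ⊕ Fin (m + 1) :=
        (Equiv.sumAssoc α (Fin m) Unit).trans
          (Equiv.sumCongr (Equiv.refl α)
            ((Equiv.sumCongr (Equiv.refl (Fin m)) (Equiv.ofUnique Unit (Fin 1))).trans
              finSumFinEquiv))
      have hsub : (fromBlocks B 0 0 (-1 : Matrix (Fin (m+1)) (Fin (m+1)) R)).submatrix e e
          = fromBlocks Cm 0 0 (-1 : Matrix Unit Unit R) := by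
        have he1 : ∀ i : α, e (Sum.inl (Sum.inl i)) = Sum.inl i := fun i => rfl
        have he2 : ∀ t : Fin m, e (Sum.inl (Sum.inr t)) = Sum.inr (Fin.castAdd 1 t) :=
          fun t => rfl
        have he3 : e (Sum.inr ()) = Sum.inr (Fin.natAdd m (0 : Fin 1)) := rfl
        ext i j
        rcases i with (i | i) | i <;> rcases j with (j | j) | j <;>
          simp only [submatrix_apply, he1, he2, he3, hCm, fromBlocks_apply₁₁,
            fromBlocks_apply₁₂, fromBlocks_apply₂₁, fromBlocks_apply₂₂,
            Matrix.neg_apply, Matrix.one_apply, Matrix.zero_apply, Fin.ext_iff,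
            Fin.coe_castAdd, Fin.coe_natAdd] <;>
          first
            | rfl
            | (split_ifs with h1 h2 <;> try rfl) <;>
                (first
                  | omega
                  | (exact absurd h1 (by omega))
                  | (exact neg_zero)
                  | (exact absurd h1 (by have := i.isLt; simp only [Fin.val_zero] at *; omega))
                  | (exact absurd h1 (by have := j.isLt; simp only [Fin.val_zero] at *; omega)))
      calc mI (fromBlocks B 0 0 (-1 : Matrix (Fin (m+1)) (Fin (m+1)) R)) (k + (m+1))
          = mI ((fromBlocks B 0 0 (-1 : Matrix (Fin (m+1)) (Fin (m+1)) R)).submatrix e e)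
              ((k + m) + 1) := by rw [mI_reindex]; ring_nf
        _ = mI (fromBlocks Cm 0 0 (-1 : Matrix Unit Unit R)) ((k + m) + 1) := by rw [hsub]
        _ = mI Cm (k + m) := mI_fromBlocks_one Cm (k + m)
        _ = mI B k := ih

lemma mI_fromBlocks' (B : Matrix α α R) (k : ℕ) :
    mI (fromBlocks B 0 0 (-1 : Matrix β β R)) (k + Fintype.card β) = mI B k := by
  let e : β ≃ Fin (Fintype.card β) := Fintype.equivFin β
  have hsub : (fromBlocks B 0 0 (-1 : Matrix β β R)).submatrix
      (Equiv.sumCongr (Equiv.refl α) e.symm) (Equiv.sumCongr (Equiv.refl α) e.symm)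
      = fromBlocks B 0 0 (-1 : Matrix (Fin (Fintype.card β)) (Fin (Fintype.card β)) R) := by
    ext i j
    rcases i with i | i <;> rcases j with j | j <;>
      simp [Matrix.one_apply, EmbeddingLike.apply_eq_iff_eq]
  rw [← mI_fromBlocks B k (Fintype.card β), ← hsub, mI_reindex]

lemma exists_eq_mul_of_range_le (C₂ : Matrix α γ R) (C₁ : Matrix α β R)
    (h : LinearMap.range C₂.mulVecLin ≤ LinearMap.range C₁.mulVecLin) :
    ∃ W : Matrix β γ R, C₂ = C₁ * W := by
  have hcol : ∀ j : γ, ∃ w : β → R, C₁ *ᵥ w = C₂ *ᵥ Pi.single j 1 := by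
    intro j
    obtain ⟨w, hw⟩ := h ⟨Pi.single j 1, rfl⟩
    exact ⟨w, hw⟩
  choose w hw using hcol
  refine ⟨Matrix.of fun b j => w j b, ?_⟩
  ext i j
  have h1 : (C₁ * Matrix.of fun b j => w j b) i j = (C₁ *ᵥ w j) i := by
    simp [Matrix.mul_apply, Matrix.mulVec, dotProduct]
  have h2 : (C₂ *ᵥ Pi.single j 1) i = C₂ i j := by
    simp [Matrix.mulVec_single]
  rw [h1, hw j, h2]

lemma mI_eq_of_range_eq {C₁ : Matrix α β R} {C₂ : Matrix α γ R}
    (h : LinearMap.range C₁.mulVecLin = LinearMap.range C₂.mulVecLin) (k : ℕ) :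
    mI C₁ k = mI C₂ k := by
  obtain ⟨W₁, hW₁⟩ := exists_eq_mul_of_range_le C₁ C₂ h.le
  obtain ⟨W₂, hW₂⟩ := exists_eq_mul_of_range_le C₂ C₁ h.ge
  exact le_antisymm (hW₁ ▸ mI_mul_le_left C₂ W₁) (hW₂ ▸ mI_mul_le_left C₁ W₂)

/-- Fitting-style invariance: two square presentations of the same module have
equal determinantal ideals. -/
theorem mI_eq_of_coker {M' : Type} [AddCommGroup M'] [Module R M']
    (A B : Matrix α α R) (π₁ π₂ : (α → R) →ₗ[R] M')
    (h₁s : Function.Surjective π₁) (h₂s : Function.Surjective π₂)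
    (h₁k : LinearMap.ker π₁ = LinearMap.range A.mulVecLin)
    (h₂k : LinearMap.ker π₂ = LinearMap.range B.mulVecLin) (k : ℕ) :
    mI A k = mI B k := by
  classical
  -- lifts
  have hlift : ∀ (πa πb : (α → R) →ₗ[R] M'), Function.Surjective πb →
      ∃ X : Matrix α α R, ∀ v, πb (X *ᵥ v) = πa v := by
    intro πa πb hb
    have : ∀ j : α, ∃ x : α → R, πb x = πa (Pi.single j 1) := fun j => hb _
    choose x hx using this
    refine ⟨Matrix.of fun i j => x j i, ?_⟩
    have key : πb.comp (Matrix.of fun i j => x j i).mulVecLin = πa := by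
      apply Module.Basis.ext (Pi.basisFun R α)
      intro j
      have h1 : (Matrix.of fun i j => x j i).mulVecLin (Pi.single j 1) = x j := by
        ext i
        simp [Matrix.mulVecLin_apply, Matrix.mulVec_single]
      simp only [LinearMap.comp_apply, Pi.basisFun_apply]
      rw [h1, hx]
    intro v
    exact congrArg (fun f => f v) (congrArg DFunLike.coe key)
  obtain ⟨X, hX⟩ := hlift π₁ π₂ h₂s
  obtain ⟨Y, hY⟩ := hlift π₂ π₁ h₁s
  -- combined map
  set ρ : ((α ⊕ α) → R) →ₗ[R] M' :=
    π₂.comp (LinearMap.funLeft R R Sum.inl) + π₁.comp (LinearMap.funLeft R R Sum.inr) with hρ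
  have hρ_apply : ∀ w, ρ w = π₂ (w ∘ Sum.inl) + π₁ (w ∘ Sum.inr) := fun w => rfl
  set C₁ : Matrix (α ⊕ α) (α ⊕ α) R := fromBlocks B X 0 (-1) with hC₁
  set C₂ : Matrix (α ⊕ α) (α ⊕ α) R := fromBlocks (-1) 0 Y A with hC₂
  have hker₁ : LinearMap.ker ρ = LinearMap.range C₁.mulVecLin := by
    apply le_antisymm
    · intro w hw
      rw [LinearMap.mem_ker, hρ_apply] at hw
      have h2 : π₂ (w ∘ Sum.inl + X *ᵥ (w ∘ Sum.inr)) = 0 := by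
        rw [map_add, hX]; exact hw
      rw [← LinearMap.mem_ker, h₂k] at h2
      obtain ⟨t, ht⟩ := h2
      rw [Matrix.mulVecLin_apply] at ht
      refine ⟨Sum.elim t (-(w ∘ Sum.inr)), ?_⟩
      rw [Matrix.mulVecLin_apply, hC₁, fromBlocks_mulVec]
      ext z
      rcases z with z | z
      · have := congrArg (fun v => v z) ht
        simp only [Pi.add_apply, Function.comp_apply] at this
        simp only [Sum.elim_inl, Sum.elim_comp_inl, Sum.elim_comp_inr, Pi.add_apply,
          Matrix.mulVec_neg, Pi.neg_apply, Function.comp_apply]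
        rw [this]; ring
      · simp [Matrix.neg_mulVec, Matrix.one_mulVec, Matrix.zero_mulVec]
    · rintro _ ⟨w, rfl⟩
      rw [LinearMap.mem_ker, Matrix.mulVecLin_apply, hC₁, fromBlocks_mulVec, hρ_apply]
      simp only [Sum.elim_comp_inl, Sum.elim_comp_inr]
      have hBmem : π₂ (B *ᵥ (w ∘ Sum.inl)) = 0 := by
        rw [← LinearMap.mem_ker, h₂k]; exact ⟨w ∘ Sum.inl, rfl⟩
      rw [map_add, hX, Matrix.zero_mulVec, Matrix.neg_mulVec, Matrix.one_mulVec, hBmem]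
      rw [zero_add, map_add, map_neg, map_zero, zero_add]
      exact add_neg_cancel _
  have hker₂ : LinearMap.ker ρ = LinearMap.range C₂.mulVecLin := by
    apply le_antisymm
    · intro w hw
      rw [LinearMap.mem_ker, hρ_apply] at hw
      have h2 : π₁ (Y *ᵥ (w ∘ Sum.inl) + w ∘ Sum.inr) = 0 := by
        rw [map_add, hY]; exact hw
      rw [← LinearMap.mem_ker, h₁k] at h2
      obtain ⟨t, ht⟩ := h2
      rw [Matrix.mulVecLin_apply] at ht
      refine ⟨Sum.elim (-(w ∘ Sum.inl)) t, ?_⟩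
      rw [Matrix.mulVecLin_apply, hC₂, fromBlocks_mulVec]
      ext z
      rcases z with z | z
      · simp [Matrix.neg_mulVec, Matrix.one_mulVec, Matrix.zero_mulVec]
      · have := congrArg (fun v => v z) ht
        simp only [Pi.add_apply, Function.comp_apply] at this
        simp only [Sum.elim_inr, Sum.elim_comp_inl, Sum.elim_comp_inr, Pi.add_apply,
          Matrix.mulVec_neg, Pi.neg_apply, Function.comp_apply]
        rw [this]; ring
    · rintro _ ⟨w, rfl⟩
      rw [LinearMap.mem_ker, Matrix.mulVecLin_apply, hC₂, fromBlocks_mulVec, hρ_apply]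
      simp only [Sum.elim_comp_inl, Sum.elim_comp_inr]
      have hAmem : π₁ (A *ᵥ (w ∘ Sum.inr)) = 0 := by
        rw [← LinearMap.mem_ker, h₁k]; exact ⟨w ∘ Sum.inr, rfl⟩
      rw [Matrix.zero_mulVec, Matrix.neg_mulVec, Matrix.one_mulVec, map_add, map_neg, map_add,
        hY, hAmem, add_zero]
      simp
  have hC₁C₂ : ∀ j, mI C₁ j = mI C₂ j :=
    fun j => mI_eq_of_range_eq (hker₁ ▸ hker₂) j
  have hmIC₁ : mI C₁ (k + Fintype.card α) = mI B k := by
    have hU₁ : C₁ = fromBlocks 1 (-X) 0 1 * fromBlocks B 0 0 (-1) := by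
      rw [hC₁, fromBlocks_multiply]
      congr 1 <;> simp
    rw [hU₁, mI_unit_mul (fromBlocks 1 (-X) 0 1) (fromBlocks 1 X 0 1)
        (by rw [fromBlocks_multiply]; simp [← fromBlocks_one])
        (by rw [fromBlocks_multiply]; simp [← fromBlocks_one])]
    exact mI_fromBlocks' B k
  have hmIC₂ : mI C₂ (k + Fintype.card α) = mI A k := by
    have hU₂ : C₂ = fromBlocks 1 0 (-Y) 1 * fromBlocks (-1) 0 0 A := by
      rw [hC₂, fromBlocks_multiply]
      congr 1 <;> simp
    rw [hU₂, mI_unit_mul (fromBlocks 1 0 (-Y) 1) (fromBlocks 1 0 Y 1)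
        (by rw [fromBlocks_multiply]; simp [← fromBlocks_one])
        (by rw [fromBlocks_multiply]; simp [← fromBlocks_one])]
    have hswap : fromBlocks (-1 : Matrix α α R) 0 0 A
        = (fromBlocks A 0 0 (-1 : Matrix α α R)).submatrix
          (Equiv.sumComm α α) (Equiv.sumComm α α) := by
      ext i j
      rcases i with i | i <;> rcases j with j | j <;> simp
    rw [hswap, mI_reindex]
    exact mI_fromBlocks' A k
  rw [← hmIC₁, ← hmIC₂, hC₁C₂]

lemma le_val_of_strictMono {k n : ℕ} {g : Fin k → Fin n} (hg : StrictMono g) :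
    ∀ t : Fin k, (t : ℕ) ≤ (g t : ℕ) := by
  have key : ∀ (v : ℕ) (h : v < k), v ≤ (g ⟨v, h⟩ : ℕ) := by
    intro v
    induction v with
    | zero => intro h; exact Nat.zero_le _
    | succ v ih =>
        intro h
        have hv : v < k := Nat.lt_of_succ_lt h
        have h1 : g ⟨v, hv⟩ < g ⟨v + 1, h⟩ := hg (by simp [Fin.mk_lt_mk])
        have h2 := ih hv
        have h3 : (g ⟨v, hv⟩ : ℕ) < (g ⟨v + 1, h⟩ : ℕ) := h1
        omega
  intro t
  simpa using key t.1 t.2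

lemma mI_diagonal {n : ℕ} (c : Fin n → ℤ) (hchain : ∀ i j : Fin n, i ≤ j → c i ∣ c j)
    (k : ℕ) (hk : k ≤ n) :
    mI (diagonal c) k = Ideal.span {∏ t : Fin k, c (Fin.castLE hk t)} := by
  apply le_antisymm
  · rw [mI, Ideal.span_le]
    rintro x ⟨r, s, rfl⟩
    by_cases hr : Function.Injective r
    swap
    · rw [det_submatrix_eq_zero_of_not_inj_left _ s hr]; exact Ideal.zero_mem _
    have hfac : (diagonal c).submatrix r s
        = diagonal (c ∘ r) * Matrix.of (fun i j => if r i = s j then (1 : ℤ) else 0) := by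
      ext i j
      rw [Matrix.mul_apply]
      rw [Finset.sum_eq_single_of_mem i (Finset.mem_univ i)
        (fun x _ hx => by simp [diagonal_apply, Ne.symm hx])]
      simp [diagonal_apply, mul_ite]
    rw [SetLike.mem_coe, hfac, det_mul, det_diagonal, Ideal.mem_span_singleton]
    refine Dvd.dvd.mul_right ?_ _
    -- ∏ t, c (castLE t) ∣ ∏ i, (c ∘ r) i
    set S : Finset (Fin n) := Finset.image r Finset.univ with hS
    have hcard : S.card = k := by
      rw [hS, Finset.card_image_of_injective _ hr, Finset.card_univ, Fintype.card_fin]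
    have h1 : ∏ i, (c ∘ r) i = ∏ j ∈ S, c j := by
      rw [hS, Finset.prod_image (fun a _ b _ h => hr h)]
      rfl
    have h2 : ∏ j ∈ S, c j = ∏ t : Fin k, c (S.orderEmbOfFin hcard t) := by
      have himg : Finset.image (S.orderEmbOfFin hcard) Finset.univ = S := by
        apply Finset.coe_injective
        rw [Finset.coe_image, Finset.coe_univ, Set.image_univ, Finset.range_orderEmbOfFin]
      have hpi : ∏ x ∈ Finset.image (⇑(S.orderEmbOfFin hcard)) Finset.univ, c x
          = ∏ t : Fin k, c (S.orderEmbOfFin hcard t) :=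
        Finset.prod_image (fun a _ b _ h => (S.orderEmbOfFin hcard).injective h)
      rw [himg] at hpi
      exact hpi
    rw [h1, h2]
    apply Finset.prod_dvd_prod_of_dvd
    intro t _
    apply hchain
    have hsm : StrictMono (S.orderEmbOfFin hcard) := (S.orderEmbOfFin hcard).strictMono
    have := le_val_of_strictMono hsm t
    exact Fin.mk_le_of_le_val (by simpa using this)
  · rw [Ideal.span_le, Set.singleton_subset_iff]
    have hsub : (diagonal c).submatrix (Fin.castLE hk) (Fin.castLE hk)
        = diagonal (fun t : Fin k => c (Fin.castLE hk t)) := by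
      ext i j
      by_cases h : i = j
      · subst h; simp
      · rw [submatrix_apply, diagonal_apply_ne _ (fun hc => h (Fin.castLE_injective hk hc)),
          diagonal_apply_ne _ h]
    have := det_mem_mI (diagonal c) (Fin.castLE hk) (Fin.castLE hk)
    rw [hsub, det_diagonal] at this
    exact this




open MvPolynomial Matrix

noncomputable def glap {P : Type} [CommRing P] {V : Type} [Fintype V] [DecidableEq V]
    (m : V → V → ℕ) : Matrix V V (MvPolynomial V P) :=
  Matrix.of fun u v => if u = v then X u else - (m u v : MvPolynomial V P)

noncomputable def critIdeal {P : Type} [CommRing P] {V : Type} [Fintype V] [DecidableEq V]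
    (m : V → V → ℕ) (i : ℕ) : Ideal (MvPolynomial V P) :=
  Ideal.span { p | ∃ r s : Fin i → V, Function.Injective r ∧ Function.Injective s ∧
    p = ((glap (P := P) m).submatrix r s).det }

/-- Let `G` be a digraph on `n` vertices whose (out-degree) Laplacian `L` over `ℤ` has
cokernel `ℤ ⊕ K(G)` with `K(G) ≅ ⊕ ℤ/f_i` and `f_1 ∣ f_2 ∣ ⋯ ∣ f_{n-1}`.  Then for all
`1 ≤ i ≤ n - 1`, the evaluation of the `i`-th critical ideal at the out-degree vector equals
the principal ideal of `ℤ` generated by `f_1 ⋯ f_i`. -/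
theorem critIdeal_eval_degree_eq_invariantFactors (n : ℕ) (m : Fin n → Fin n → ℕ)
    (f : Fin (n - 1) → ℕ) (hdvd : ∀ i j : Fin (n - 1), i ≤ j → f i ∣ f j)
    (L : Matrix (Fin n) (Fin n) ℤ)
    (hL : L = Matrix.of fun u v : Fin n =>
      if u = v then ∑ w ∈ Finset.univ.erase u, (m u w : ℤ) else -(m u v : ℤ))
    (e : ((Fin n → ℤ) ⧸ LinearMap.range (Matrix.toLin' Lᵀ)) ≃ₗ[ℤ]
      ℤ × ((i : Fin (n - 1)) → ZMod (f i))) :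
    ∀ i : ℕ, 1 ≤ i → i ≤ n - 1 →
      Ideal.map (MvPolynomial.eval fun v : Fin n => ∑ w ∈ Finset.univ.erase v, (m v w : ℤ))
          (critIdeal (P := ℤ) m i)
        = Ideal.span {(∏ j ∈ Finset.univ.filter (fun j : Fin (n - 1) => (j : ℕ) < i),
            (f j : ℤ))} := by
  intro i hi1 hi2
  have hn1 : 1 ≤ n - 1 := le_trans hi1 hi2
  have hn2 : 2 ≤ n := by omega
  set dvec : Fin n → ℤ := fun v => ∑ w ∈ Finset.univ.erase v, (m v w : ℤ) with hdvec
  -- the evaluated generalized Laplacian is L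
  have hglapL : (glap (P := ℤ) m).map (MvPolynomial.eval dvec) = L := by
    ext u v
    rw [Matrix.map_apply, hL]
    simp only [glap, Matrix.of_apply]
    split_ifs with h
    · subst h; simp [hdvec]
    · simp
  -- Step 1 : evaluation of the critical ideal is the ideal of i×i minors of L
  have hevaldet : ∀ (r s : Fin i → Fin n),
      (MvPolynomial.eval dvec) ((glap (P := ℤ) m).submatrix r s).det
        = (L.submatrix r s).det := by
    intro r s
    rw [RingHom.map_det, RingHom.mapMatrix_apply, ← Matrix.submatrix_map, hglapL]
  have hLHS : Ideal.map (MvPolynomial.eval dvec) (critIdeal (P := ℤ) m i) = mI L i := by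
    rw [critIdeal, Ideal.map_span]
    apply le_antisymm
    · rw [Ideal.span_le]
      rintro x ⟨p, ⟨r, s, hr, hs, rfl⟩, rfl⟩
      rw [hevaldet r s]
      exact det_mem_mI L r s
    · rw [mI, Ideal.span_le]
      rintro x ⟨r, s, rfl⟩
      by_cases hr : Function.Injective r
      · by_cases hs : Function.Injective s
        · exact Ideal.subset_span
            ⟨((glap (P := ℤ) m).submatrix r s).det, ⟨r, s, hr, hs, rfl⟩, hevaldet r s⟩
        · rw [det_submatrix_eq_zero_of_not_inj_right _ r hs]
          exact Ideal.zero_mem _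
      · rw [det_submatrix_eq_zero_of_not_inj_left _ s hr]
        exact Ideal.zero_mem _
  -- Step 2 : the diagonal comparison matrix
  set c : Fin n → ℕ := fun j => if h : (j : ℕ) < n - 1 then f ⟨j, h⟩ else 0 with hc
  set D : Matrix (Fin n) (Fin n) ℤ := diagonal (fun j => (c j : ℤ)) with hD
  have hchain : ∀ j j' : Fin n, j ≤ j' → (c j : ℤ) ∣ (c j' : ℤ) := by
    intro j j' hjj
    by_cases h' : (j' : ℕ) < n - 1
    · have h : (j : ℕ) < n - 1 := lt_of_le_of_lt hjj h'
      simp only [hc, dif_pos h, dif_pos h']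
      exact_mod_cast hdvd ⟨j, h⟩ ⟨j', h'⟩ hjj
    · simp only [hc, dif_neg h']
      simp
  have hle : n - 1 ≤ n := Nat.sub_le n 1
  set lastIdx : Fin n := ⟨n - 1, by omega⟩ with hlastIdx
  -- the projection map with kernel the column space of D
  set castm : (i' : Fin (n - 1)) → (ℤ →ₗ[ℤ] ZMod (f i')) :=
    fun i' => ((Int.castRingHom (ZMod (f i'))).toAddMonoidHom).toIntLinearMap with hcastm
  set π₂ : (Fin n → ℤ) →ₗ[ℤ] ℤ × ((i' : Fin (n - 1)) → ZMod (f i')) :=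
    LinearMap.prod (LinearMap.proj lastIdx)
      (LinearMap.pi fun i' => (castm i').comp (LinearMap.proj (Fin.castLE hle i'))) with hπ₂
  have hπ₂_apply : ∀ x, π₂ x
      = (x lastIdx, fun i' => ((x (Fin.castLE hle i') : ℤ) : ZMod (f i'))) := fun x => rfl
  have hπ₂s : Function.Surjective π₂ := by
    rintro ⟨t, y⟩
    have : ∀ i' : Fin (n - 1), ∃ z : ℤ, (z : ZMod (f i')) = y i' :=
      fun i' => ZMod.intCast_surjective (y i')
    choose z hz using this
    refine ⟨fun j => if h : (j : ℕ) < n - 1 then z ⟨j, h⟩ else t, ?_⟩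
    rw [hπ₂_apply]
    refine Prod.ext ?_ ?_
    · simp only [hlastIdx]
      rw [dif_neg (lt_irrefl (n - 1))]
    · funext i'
      have h : ((Fin.castLE hle i' : Fin n) : ℕ) < n - 1 := i'.2
      simp only []
      rw [dif_pos h]
      have : (⟨((Fin.castLE hle i' : Fin n) : ℕ), h⟩ : Fin (n - 1)) = i' := by
        apply Fin.ext; rfl
      rw [this, hz]
  have hπ₂k : LinearMap.ker π₂ = LinearMap.range D.mulVecLin := by
    apply le_antisymm
    · intro x hx
      rw [LinearMap.mem_ker, hπ₂_apply, Prod.mk_eq_zero] at hx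
      obtain ⟨hx1, hx2⟩ := hx
      have hdvd' : ∀ j : Fin n, (c j : ℤ) ∣ x j := by
        intro j
        by_cases h : (j : ℕ) < n - 1
        · have h2 := congrFun hx2 ⟨j, h⟩
          rw [Pi.zero_apply, ZMod.intCast_zmod_eq_zero_iff_dvd] at h2
          have hcast : Fin.castLE hle (⟨j, h⟩ : Fin (n - 1)) = j := by
            apply Fin.ext; rfl
          rw [hcast] at h2
          simp only [hc, dif_pos h]
          exact h2
        · have hj : j = lastIdx := by
            apply Fin.ext
            have := j.2
            simp only [hlastIdx]
            omega
          simp only [hc, dif_neg h, Nat.cast_zero]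
          rw [hj, hx1]
      refine ⟨fun j => x j / (c j : ℤ), ?_⟩
      rw [Matrix.mulVecLin_apply]
      funext j
      rw [Matrix.mulVec_diagonal]
      exact Int.mul_ediv_cancel' (hdvd' j)
    · rintro _ ⟨x, rfl⟩
      rw [LinearMap.mem_ker, hπ₂_apply, Matrix.mulVecLin_apply, Prod.mk_eq_zero]
      constructor
      · rw [Matrix.mulVec_diagonal]
        have : c lastIdx = 0 := by
          simp only [hc, hlastIdx]
          rw [dif_neg (lt_irrefl (n - 1))]
        rw [this]
        simp
      · funext i'
        rw [Matrix.mulVec_diagonal]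
        have : c (Fin.castLE hle i') = f i' := by
          have h : ((Fin.castLE hle i' : Fin n) : ℕ) < n - 1 := i'.2
          simp only [hc, dif_pos h]
          congr 1
        rw [this]
        push_cast
        rw [ZMod.natCast_self]
        simp
  -- the projection map with kernel the column space of Lᵀ
  set π₁ : (Fin n → ℤ) →ₗ[ℤ] ℤ × ((i' : Fin (n - 1)) → ZMod (f i')) :=
    (e : ((Fin n → ℤ) ⧸ LinearMap.range (Matrix.toLin' Lᵀ)) →ₗ[ℤ] _).comp
      (LinearMap.range (Matrix.toLin' Lᵀ)).mkQ with hπ₁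
  have hπ₁s : Function.Surjective π₁ :=
    e.surjective.comp (Submodule.mkQ_surjective _)
  have htoLin : Matrix.toLin' Lᵀ = Lᵀ.mulVecLin := by
    apply LinearMap.ext
    intro v
    rw [Matrix.toLin'_apply, Matrix.mulVecLin_apply]
  have hπ₁k : LinearMap.ker π₁ = LinearMap.range Lᵀ.mulVecLin := by
    rw [hπ₁, LinearMap.ker_comp, LinearEquiv.ker, Submodule.comap_bot, Submodule.ker_mkQ,
      htoLin]
  -- Fitting invariance
  have hkey : mI Lᵀ i = mI D i :=
    mI_eq_of_coker Lᵀ D π₁ π₂ hπ₁s hπ₂s hπ₁k hπ₂k i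
  have hin : i ≤ n := le_trans hi2 hle
  have hdiag : mI D i = Ideal.span {∏ t : Fin i, ((c (Fin.castLE hin t) : ℤ))} :=
    mI_diagonal (fun j => (c j : ℤ)) hchain i hin
  -- product identification
  have hprod : ∏ t : Fin i, ((c (Fin.castLE hin t) : ℤ))
      = ∏ j ∈ Finset.univ.filter (fun j : Fin (n - 1) => (j : ℕ) < i), (f j : ℤ) := by
    refine Finset.prod_bij' (fun t _ => (⟨(t : ℕ), lt_of_lt_of_le t.2 hi2⟩ : Fin (n - 1)))
      (fun j hj => (⟨(j : ℕ), (Finset.mem_filter.mp hj).2⟩ : Fin i)) ?_ ?_ ?_ ?_ ?_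
    · intro t _
      rw [Finset.mem_filter]
      exact ⟨Finset.mem_univ _, t.2⟩
    · intro j hj
      exact Finset.mem_univ _
    · intro t _
      apply Fin.ext; rfl
    · intro j hj
      apply Fin.ext; rfl
    · intro t _
      have h : ((Fin.castLE hin t : Fin n) : ℕ) < n - 1 := lt_of_lt_of_le t.2 hi2
      simp only [hc, dif_pos h]
      norm_cast
  rw [hLHS, ← mI_transpose L, hkey, hdiag, hprod]
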